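/- Let W = (w_{ij}) ∈ ℝ^{n×n} be a real symmetric positive definite matrix and let S ⊆ {1,…,n} be nonempty. Then w̃(S) ≤ (|S|−1) · (λ_max(W)/λ_min(W)) · χ_S^T W χ_S, where w̃(S) = Σ_{{i,j}⊆S, i≠j} (w_{ij} + w_{ii} + w_{jj}) is the modified weight sum over unordered pairs of distinct elements of S. -/

import Mathlib

open Matrix Finset

/-- χ_S^T W χ_S = Σ_{i∈S} Σ_{j∈S} w_{ij}. -/
noncomputable def quadForm {n : ℕ} (W : Matrix (Fin n) (Fin n) ℝ) (S : Finset (Fin n)) : ℝ :=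
  ∑ i ∈ S, ∑ j ∈ S, W i j

/-- Sum of `f i j` over unordered pairs {i,j} ⊆ S with i ≠ j (for symmetric `f`). -/
noncomputable def pairSum {n : ℕ} (f : Fin n → Fin n → ℝ) (S : Finset (Fin n)) : ℝ :=
  (∑ p ∈ S.offDiag, f p.1 p.2) / 2

/-- w̃(S) = Σ_{{i,j}⊆S, i≠j} (w_{ij} + w_{ii} + w_{jj}). -/
noncomputable def modWeight {n : ℕ} (W : Matrix (Fin n) (Fin n) ℝ) (S : Finset (Fin n)) : ℝ :=
  pairSum (fun i j => W i j + W i i + W j j) S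

/-- Smallest eigenvalue of a real symmetric matrix. -/
noncomputable def lamMin {n : ℕ} {W : Matrix (Fin n) (Fin n) ℝ} (hW : W.IsHermitian) : ℝ :=
  ⨅ i, hW.eigenvalues i

/-- Largest eigenvalue of a real symmetric matrix. -/
noncomputable def lamMax {n : ℕ} {W : Matrix (Fin n) (Fin n) ℝ} (hW : W.IsHermitian) : ℝ :=
  ⨆ i, hW.eigenvalues i

lemma quad_decomp {n : ℕ} {W : Matrix (Fin n) (Fin n) ℝ} (hW : W.IsHermitian)
    (x : Fin n → ℝ) :
    ∃ y : Fin n → ℝ, x ⬝ᵥ (W *ᵥ x) = ∑ i, hW.eigenvalues i * (y i)^2 ∧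
      x ⬝ᵥ x = ∑ i, (y i)^2 := by
  classical
  set U : Matrix (Fin n) (Fin n) ℝ := (hW.eigenvectorUnitary : Matrix (Fin n) (Fin n) ℝ) with hU
  have hT : Uᵀ = star U := by
    rw [Matrix.star_eq_conjTranspose, conjTranspose_eq_transpose_of_trivial]
  refine ⟨star U *ᵥ x, ?_, ?_⟩
  · conv_lhs => rw [hW.spectral_theorem, Unitary.conjStarAlgAut_apply, ← hU]
    rw [← mulVec_mulVec, ← mulVec_mulVec, dotProduct_mulVec, ← mulVec_transpose]
    simp only [hT, dotProduct, mulVec_diagonal, Function.comp]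
    exact Finset.sum_congr rfl fun i _ => by
      simp only [RCLike.ofReal_real_eq_id, id_eq]; ring
  · have h1 : U * star U = 1 := (Matrix.mem_unitaryGroup_iff).mp (hW.eigenvectorUnitary).2
    have h2 := congrArg (fun M => x ⬝ᵥ (M *ᵥ x)) h1
    simp only [one_mulVec] at h2
    rw [← h2, ← mulVec_mulVec, dotProduct_mulVec, ← mulVec_transpose, hT]
    simp [dotProduct, sq]

lemma quad_le_max {n : ℕ} {W : Matrix (Fin n) (Fin n) ℝ} (hW : W.IsHermitian)
    [Nonempty (Fin n)] (x : Fin n → ℝ) :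
    x ⬝ᵥ (W *ᵥ x) ≤ lamMax hW * (x ⬝ᵥ x) := by
  obtain ⟨y, h1, h2⟩ := quad_decomp hW x
  rw [h1, h2, Finset.mul_sum]
  exact Finset.sum_le_sum fun i _ => mul_le_mul_of_nonneg_right
    (le_ciSup (Set.Finite.bddAbove (Set.finite_range _)) i) (sq_nonneg _)

lemma min_le_quad {n : ℕ} {W : Matrix (Fin n) (Fin n) ℝ} (hW : W.IsHermitian)
    [Nonempty (Fin n)] (x : Fin n → ℝ) :
    lamMin hW * (x ⬝ᵥ x) ≤ x ⬝ᵥ (W *ᵥ x) := by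
  obtain ⟨y, h1, h2⟩ := quad_decomp hW x
  rw [h1, h2, Finset.mul_sum]
  exact Finset.sum_le_sum fun i _ => mul_le_mul_of_nonneg_right
    (ciInf_le (Set.Finite.bddBelow (Set.finite_range _)) i) (sq_nonneg _)

lemma offDiag_sum_eq {n : ℕ} (S : Finset (Fin n)) (g : Fin n → Fin n → ℝ) :
    ∑ p ∈ S.offDiag, g p.1 p.2 = (∑ i ∈ S, ∑ j ∈ S, g i j) - ∑ i ∈ S, g i i := by
  have h := Finset.sum_union (disjoint_diag_offDiag S) (f := fun p : Fin n × Fin n => g p.1 p.2)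
  rw [diag_union_offDiag, Finset.sum_product, Finset.sum_diag] at h
  simp only at h
  linarith

theorem stmt3 {n : ℕ} (W : Matrix (Fin n) (Fin n) ℝ) (hW : W.PosDef)
    (S : Finset (Fin n)) (hS : S.Nonempty) :
    modWeight W S ≤ ((S.card : ℝ) - 1) * (lamMax hW.1 / lamMin hW.1) * quadForm W S := by
  classical
  have : Nonempty (Fin n) := ⟨hS.choose⟩
  set lm := lamMin hW.1 with hlm
  set lM := lamMax hW.1 with hlM
  have hlm_pos : 0 < lm := by
    have hmem : lm ∈ Set.range hW.1.eigenvalues := by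
      rw [hlm, lamMin, iInf]
      exact (Set.range_nonempty _).csInf_mem (Set.finite_range _)
    obtain ⟨i, hi⟩ := hmem
    rw [← hi]
    exact hW.eigenvalues_pos i
  have hlmM : lm ≤ lM := le_trans
    (ciInf_le (Set.Finite.bddBelow (Set.finite_range _)) (Classical.arbitrary _))
    (le_ciSup (Set.Finite.bddAbove (Set.finite_range _)) _)
  have hlM_pos : 0 < lM := lt_of_lt_of_le hlm_pos hlmM
  set c : ℝ := (S.card : ℝ) with hc
  set Q := quadForm W S with hQdef
  set D := ∑ i ∈ S, W i i with hDdef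
  -- indicator vector facts
  set χ : Fin n → ℝ := fun i => if i ∈ S then 1 else 0 with hχ
  have hχQ : χ ⬝ᵥ (W *ᵥ χ) = Q := by
    simp [hχ, hQdef, quadForm, dotProduct, mulVec, mul_ite, ite_mul, Finset.sum_ite_mem]
  have hχχ : χ ⬝ᵥ χ = c := by
    simp [hχ, hc, dotProduct, ite_zero_mul_ite_zero, Finset.sum_ite_mem]
  have hQ_le : Q ≤ lM * c := by
    have := quad_le_max hW.1 χ; rwa [hχQ, hχχ] at this
  have hQ_ge : lm * c ≤ Q := by
    have := min_le_quad hW.1 χ; rwa [hχQ, hχχ] at this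
  -- diagonal entries
  have hdiag_le : ∀ i, W i i ≤ lM := by
    intro i
    have h := quad_le_max hW.1 (Pi.single i 1 : Fin n → ℝ)
    simpa [mulVec_single, single_dotProduct] using h
  have hdiag_ge : ∀ i, 0 ≤ W i i := by
    intro i
    have h := min_le_quad hW.1 (Pi.single i 1 : Fin n → ℝ)
    simp [mulVec_single, single_dotProduct] at h
    linarith
  have hD_le : D ≤ c * lM := by
    calc D ≤ ∑ _i ∈ S, lM := Finset.sum_le_sum fun i _ => hdiag_le i
    _ = c * lM := by rw [Finset.sum_const, nsmul_eq_mul]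
  have hD_ge : 0 ≤ D := Finset.sum_nonneg fun i _ => hdiag_ge i
  -- modWeight expansion
  have hmw : modWeight W S = ((Q - D) + (c * D - D) + (c * D - D)) / 2 := by
    rw [modWeight, pairSum]
    congr 1
    have e0 : ∑ p ∈ S.offDiag, (W p.1 p.2 + W p.1 p.1 + W p.2 p.2)
        = (∑ p ∈ S.offDiag, W p.1 p.2) + (∑ p ∈ S.offDiag, W p.1 p.1)
          + (∑ p ∈ S.offDiag, W p.2 p.2) := by
      rw [← Finset.sum_add_distrib, ← Finset.sum_add_distrib]
    rw [e0, offDiag_sum_eq S (fun i j => W i j),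
      offDiag_sum_eq S (fun i j => W i i), offDiag_sum_eq S (fun i j => W j j)]
    have e1 : ∑ i ∈ S, ∑ _j ∈ S, W i i = c * D := by
      simp only [Finset.sum_const, nsmul_eq_mul, hc, hDdef, ← Finset.mul_sum]
    have e2 : ∑ _i ∈ S, ∑ j ∈ S, W j j = c * D := by
      rw [Finset.sum_const, nsmul_eq_mul, hc, hDdef]
    have e3 : ∑ i ∈ S, ∑ j ∈ S, W i j = Q := rfl
    rw [e1, e2, e3]
  -- case on |S|
  rcases eq_or_lt_of_le (show 1 ≤ S.card from Finset.Nonempty.card_pos hS) with h1 | h2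
  · obtain ⟨a, rfl⟩ := Finset.card_eq_one.mp h1.symm
    have : modWeight W {a} = 0 := by
      simp [modWeight, pairSum, Finset.offDiag_singleton]
    rw [this]
    have hc1 : c = 1 := by simp [hc]
    rw [hc1]
    simp
  · have hc2 : (2:ℝ) ≤ c := by
      rw [hc]; exact_mod_cast h2
    have key1 : modWeight W S ≤ c * (c - 1) * lM := by
      rw [hmw]
      nlinarith [mul_nonneg (show (0:ℝ) ≤ c - 3/2 by linarith)
        (show (0:ℝ) ≤ c * lM - D by linarith)]
    have hnn : 0 ≤ (c - 1) * (lM / lm) :=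
      mul_nonneg (by linarith) (div_nonneg hlM_pos.le hlm_pos.le)
    have key2 : c * (c - 1) * lM ≤ (c - 1) * (lM / lm) * Q := by
      have h3 : (c - 1) * (lM / lm) * (lm * c) ≤ (c - 1) * (lM / lm) * Q :=
        mul_le_mul_of_nonneg_left hQ_ge hnn
      have h4 : (c - 1) * (lM / lm) * (lm * c) = c * (c - 1) * lM := by
        field_simp
      linarith
    linarith
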